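/- In the dependency graph of a finite set of TGDs, a position has infinite rank if and only if it is reachable from a position lying on a cycle that contains at least one special edge; equivalently, a position π has finite rank iff no path ending at π passes through a cycle containing a special edge. -/

import Mathlib

/-- `RankGE edge special v n` holds when there is a finite path in the
dependency graph ending at `v` that uses at least `n` special edges. -/
inductive RankGE {V : Type} (edge special : V → V → Prop) : V → ℕ → Prop
  | refl (v : V) : RankGE edge special v 0
  | step {u v : V} {n : ℕ} : RankGE edge special u n → edge u v →
      RankGE edge special v n
  | sstep {u v : V} {n : ℕ} : RankGE edge special u n → special u v →
      RankGE edge special v (n + 1)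

/-- A position has finite rank if the number of special edges on paths ending
at it is bounded. -/
def FiniteRank {V : Type} (edge special : V → V → Prop) (v : V) : Prop :=
  ∃ N, ∀ n, RankGE edge special v n → n ≤ N

private lemma rankGE_of_rtg {V : Type} {edge special : V → V → Prop} {v v' : V} {n : ℕ}
    (h : RankGE edge special v n) (hr : Relation.ReflTransGen edge v v') :
    RankGE edge special v' n := by
  induction hr with
  | refl => exact h
  | tail _ he ih => exact RankGE.step ih he

private lemma rankGE_key {V : Type} {edge special : V → V → Prop}
    (hs : ∀ u v, special u v → edge u v) {v : V} {n : ℕ}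
    (h : RankGE edge special v n) :
    (∃ u w, special u w ∧ Relation.ReflTransGen edge w u ∧
        Relation.ReflTransGen edge w v) ∨
    ∃ S : Finset V, n ≤ S.card ∧ ∀ x ∈ S, ∃ w', special x w' ∧
        Relation.ReflTransGen edge w' v := by
  classical
  induction h with
  | refl v => exact Or.inr ⟨∅, by simp⟩
  | @step u v n _ he ih =>
    rcases ih with ⟨a, b, hab, hba, hbu⟩ | ⟨S, hcard, hS⟩
    · exact Or.inl ⟨a, b, hab, hba, hbu.tail he⟩
    · exact Or.inr ⟨S, hcard, fun x hx => by
        obtain ⟨w', hsp, hr⟩ := hS x hx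
        exact ⟨w', hsp, hr.tail he⟩⟩
  | @sstep u v n _ hsp ih =>
    rcases ih with ⟨a, b, hab, hba, hbu⟩ | ⟨S, hcard, hS⟩
    · exact Or.inl ⟨a, b, hab, hba, hbu.tail (hs _ _ hsp)⟩
    · by_cases hu : u ∈ S
      · obtain ⟨w', hsp', hr⟩ := hS u hu
        exact Or.inl ⟨u, w', hsp', hr, hr.tail (hs _ _ hsp)⟩
      · refine Or.inr ⟨insert u S, ?_, ?_⟩
        · rw [Finset.card_insert_of_notMem hu]; omega
        · intro x hx
          rcases Finset.mem_insert.mp hx with rfl | hx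
          · exact ⟨v, hsp, Relation.ReflTransGen.refl⟩
          · obtain ⟨w', hsp', hr⟩ := hS x hx
            exact ⟨w', hsp', hr.tail (hs _ _ hsp)⟩

/-- In the (finite) dependency graph of a finite set of TGDs, a position `π`
has infinite rank if and only if it is reachable from a position lying on a
cycle that contains at least one special edge. -/
theorem infiniteRank_iff_special_cycle {V : Type} [Fintype V]
    (edge special : V → V → Prop) (hs : ∀ u v, special u v → edge u v) (π : V) :
    ¬ FiniteRank edge special π ↔
      ∃ u w, special u w ∧ Relation.ReflTransGen edge w u ∧
        Relation.ReflTransGen edge w π := by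
  constructor
  · intro hnf
    by_contra hc
    apply hnf
    refine ⟨Fintype.card V, fun n hr => ?_⟩
    by_contra hn
    rcases rankGE_key hs hr with hcyc | ⟨S, hcard, _⟩
    · exact hc hcyc
    · have := Finset.card_le_univ S
      omega
  · rintro ⟨u, w, hsp, hwu, hwπ⟩ ⟨N, hN⟩
    have pump : ∀ n, RankGE edge special w n := by
      intro n
      induction n with
      | zero => exact RankGE.refl w
      | succ n ih => exact RankGE.sstep (rankGE_of_rtg ih hwu) hsp
    have := hN (N + 1) (rankGE_of_rtg (pump (N + 1)) hwπ)
    omega
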